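/- arXiv:2604.09641 — 3 statements merged into one kernel-verified Lean document; each statement's English description precedes it below -/
import Mathlib

section
/- Let I=(0,1), 0<b<1, σ₁>0, σ₂<0 with |σ₂|/σ₁ ≠ (1-b)/b. Define a(u,v)=∫₀^b σ₁ u'v' + ∫_b^1 σ₂ u'v' on H¹₀(I). Then there exists a bounded bijective operator T on H¹₀(I) and α>0 such that |a(v,Tv)| ≥ α‖v‖²_{H¹₀(I)} for all v ∈ H¹₀(I); in particular the associated operator A: H¹₀(I) → H⁻¹(I) is an isomorphism. -/
open MeasureTheory Set Real

noncomputable section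

/-- Membership in `H¹₀(0,1)`, represented through the weak derivative `g`:
`u(x) = ∫₀ˣ g`, with `g ∈ L²(0,1)` and `∫₀¹ g = 0` (so that `u(0)=u(1)=0`). -/
def memH10 (g : ℝ → ℝ) : Prop :=
  MemLp g 2 (volume.restrict (Ioo (0:ℝ) 1)) ∧ (∫ t in Ioo (0:ℝ) 1, g t) = 0

/-- Squared `H¹₀` norm: `‖u‖² = ∫₀¹ (u')²`. -/
def nsq (g : ℝ → ℝ) : ℝ := ∫ t in Ioo (0:ℝ) 1, (g t)^2

/-- The sign-changing bilinear form `a(u,v) = ∫₀ᵇ σ₁ u'v' + ∫ᵇ¹ σ₂ u'v'`,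
expressed through weak derivatives. -/
def aform (b σ₁ σ₂ : ℝ) (g h : ℝ → ℝ) : ℝ :=
  (∫ x in Ioo (0:ℝ) b, σ₁ * g x * h x) + ∫ x in Ioo b 1, σ₂ * g x * h x



section Helpers

variable {ν : Measure ℝ}

lemma finIoo (a c : ℝ) : IsFiniteMeasure (volume.restrict (Ioo a c)) :=
  ⟨by rw [Measure.restrict_apply_univ]; exact measure_Ioo_lt_top⟩

lemma memsub {g : ℝ → ℝ} {s : Set ℝ} (hg : MemLp g 2 (volume.restrict (Ioo (0:ℝ) 1)))
    (hs : s ⊆ Ioo (0:ℝ) 1) : MemLp g 2 (volume.restrict s) := by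
  rw [← Measure.restrict_restrict_of_subset hs]; exact hg.restrict s

lemma memℒp_mul_bound {e h : ℝ → ℝ} {K : ℝ} [IsFiniteMeasure ν] (he : Measurable e)
    (hK : ∀ x, |e x| ≤ K) (hh : MemLp h 2 ν) : MemLp (fun x => e x * h x) 2 ν := by
  have hK0 : 0 ≤ K := le_trans (abs_nonneg _) (hK 0)
  refine MemLp.of_le (hh.const_mul K) (he.aestronglyMeasurable.mul hh.1) ?_
  filter_upwards with x
  simp only [norm_mul, Real.norm_eq_abs, abs_mul]
  rw [abs_of_nonneg hK0]
  exact mul_le_mul_of_nonneg_right (hK x) (abs_nonneg _)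

lemma int_mul {f g : ℝ → ℝ} (hf : MemLp f 2 ν) (hg : MemLp g 2 ν) :
    Integrable (fun x => f x * g x) ν := by
  haveI : ENNReal.HolderTriple 2 2 1 := ⟨by simp only [inv_one]; exact ENNReal.inv_two_add_inv_two⟩
  have h : MemLp (g • f) 1 ν := hf.smul hg
  rw [memLp_one_iff_integrable] at h
  refine h.congr ?_
  filter_upwards with x
  exact (mul_comm (g x) (f x))

-- split integral over (0,1) into (0,b) and (b,1)
lemma split_int {b : ℝ} (hb0 : 0 < b) (hb1 : b < 1) {f : ℝ → ℝ}
    (hf : IntegrableOn f (Ioo (0:ℝ) 1)) :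
    ∫ x in Ioo (0:ℝ) 1, f x = (∫ x in Ioo (0:ℝ) b, f x) + ∫ x in Ioo b 1, f x := by
  have i1 : IntegrableOn f (Ioo (0:ℝ) b) := hf.mono_set (Ioo_subset_Ioo le_rfl hb1.le)
  have i2 : IntegrableOn f (Ioo b 1) := hf.mono_set (Ioo_subset_Ioo hb0.le le_rfl)
  rw [setIntegral_congr_set Ioo_ae_eq_Ioc, setIntegral_congr_set (f := f) Ioo_ae_eq_Ioc,
    setIntegral_congr_set (f := f) Ioo_ae_eq_Ioc,
    ← Set.Ioc_union_Ioc_eq_Ioc hb0.le hb1.le]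
  exact setIntegral_union (Set.Ioc_disjoint_Ioc_of_le le_rfl) measurableSet_Ioc
    (i1.congr_set_ae Ioo_ae_eq_Ioc.symm) (i2.congr_set_ae Ioo_ae_eq_Ioc.symm)

-- Cauchy-Schwarz
lemma cs_sq [IsFiniteMeasure ν] {g : ℝ → ℝ} (hg : MemLp g 2 ν) :
    (∫ x, g x ∂ν)^2 ≤ (ν univ).toReal * ∫ x, (g x)^2 ∂ν := by
  set V := (ν univ).toReal with hV
  set P := ∫ x, g x ∂ν with hP
  set A := ∫ x, (g x)^2 ∂ν with hA
  have hi1 : Integrable g ν := hg.integrable one_le_two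
  have hi2 : Integrable (fun x => (g x)^2) ν := hg.integrable_sq
  rcases eq_or_ne V 0 with h0 | h0
  · have : ν = 0 := by
      have := ENNReal.toReal_eq_zero_iff (ν univ) |>.mp h0
      rcases this with h | h
      · exact Measure.measure_univ_eq_zero.mp h
      · exact absurd h (measure_ne_top ν univ)
    simp [hP, hA, this, h0]
  · have hVpos : 0 < V := lt_of_le_of_ne ENNReal.toReal_nonneg (Ne.symm h0)
    have key : (0:ℝ) ≤ ∫ x, (V * g x - P)^2 ∂ν := integral_nonneg fun x => sq_nonneg _
    have expand : ∫ x, (V * g x - P)^2 ∂ν = V^2 * A - 2*V*P*P + P^2 * V := by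
      have e : ∀ x, (V * g x - P)^2 = V^2 * (g x)^2 - (2*V*P) * g x + P^2 := fun x => by ring
      simp_rw [e]
      rw [integral_add ?ia ?ib, integral_sub ?ic ?id, integral_const_mul,
        integral_const_mul, integral_const, smul_eq_mul]
      case ia => exact (hi2.const_mul (V^2)).sub (hi1.const_mul (2*V*P))
      case ib => exact integrable_const _
      case ic => exact hi2.const_mul (V^2)
      case id => exact hi1.const_mul (2*V*P)
      simp only [measureReal_def, ← hV, ← hP, ← hA]
      ring
    nlinarith [key, expand, hVpos]

end Helpers

section TPart
open MeasureTheory Set Real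



lemma finsub {s : Set ℝ} (hs : s ⊆ Ioo (0:ℝ) 1) : IsFiniteMeasure (volume.restrict s) :=
  ⟨by rw [Measure.restrict_apply_univ]; exact lt_of_le_of_lt (measure_mono hs) measure_Ioo_lt_top⟩

lemma intOn {g : ℝ → ℝ} {s : Set ℝ} (hg : MemLp g 2 (volume.restrict (Ioo (0:ℝ) 1)))
    (hs : s ⊆ Ioo (0:ℝ) 1) : IntegrableOn g s volume := by
  haveI := finsub hs
  exact (memsub hg hs).integrable one_le_two

lemma intOnSq {g : ℝ → ℝ} {s : Set ℝ} (hg : MemLp g 2 (volume.restrict (Ioo (0:ℝ) 1)))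
    (hs : s ⊆ Ioo (0:ℝ) 1) : IntegrableOn (fun x => (g x)^2) s volume :=
  (memsub hg hs).integrable_sq

lemma intOnMul {g h : ℝ → ℝ} {s : Set ℝ} (hg : MemLp g 2 (volume.restrict (Ioo (0:ℝ) 1)))
    (hh : MemLp h 2 (volume.restrict (Ioo (0:ℝ) 1)))
    (hs : s ⊆ Ioo (0:ℝ) 1) : IntegrableOn (fun x => g x * h x) s volume :=
  int_mul (memsub hg hs) (memsub hh hs)

/-- The T-coercivity operator. -/
def Tm (b s : ℝ) (g : ℝ → ℝ) : ℝ → ℝ := fun x =>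
  if x < b then g x + (s - 1) * ((∫ t in Ioo (0:ℝ) b, g t) / b)
  else -g x + (s + 1) * ((∫ t in Ioo b (1:ℝ), g t) / (1 - b))

variable {b s : ℝ}

lemma sub₁ (hb1 : b < 1) : Ioo (0:ℝ) b ⊆ Ioo (0:ℝ) 1 := Ioo_subset_Ioo le_rfl hb1.le
lemma sub₂ (hb0 : 0 < b) : Ioo b (1:ℝ) ⊆ Ioo (0:ℝ) 1 := Ioo_subset_Ioo hb0.le le_rfl

lemma vol₁ (hb0 : 0 < b) : (volume (Ioo (0:ℝ) b)).toReal = b := by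
  rw [Real.volume_Ioo]; simp [ENNReal.toReal_ofReal hb0.le]

lemma vol₂ (hb1 : b < 1) : (volume (Ioo b (1:ℝ))).toReal = 1 - b := by
  rw [Real.volume_Ioo]; exact ENNReal.toReal_ofReal (by linarith)

lemma vol₁' (hb0 : 0 < b) : (volume (Ioo (0:ℝ) b)).toReal = b := vol₁ hb0
lemma vol₂' (hb1 : b < 1) : (volume (Ioo b (1:ℝ))).toReal = 1 - b := vol₂ hb1

lemma pq_zero (hb0 : 0 < b) (hb1 : b < 1) {g : ℝ → ℝ} (hg : memH10 g) :
    (∫ x in Ioo (0:ℝ) b, g x) + ∫ x in Ioo b (1:ℝ), g x = 0 := by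
  haveI := finsub (subset_refl (Ioo (0:ℝ) 1))
  have : IntegrableOn g (Ioo (0:ℝ) 1) volume := intOn hg.1 (subset_refl _)
  rw [← split_int hb0 hb1 this]
  exact hg.2

lemma Tm_on₁ {g : ℝ → ℝ} {x : ℝ} (hx : x ∈ Ioo (0:ℝ) b) :
    Tm b s g x = g x + (s - 1) * ((∫ t in Ioo (0:ℝ) b, g t) / b) := by
  simp [Tm, hx.2]

lemma Tm_on₂ {g : ℝ → ℝ} {x : ℝ} (hx : x ∈ Ioo b (1:ℝ)) :
    Tm b s g x = -g x + (s + 1) * ((∫ t in Ioo b (1:ℝ), g t) / (1 - b)) := by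
  simp [Tm, not_lt.mpr hx.1.le]

lemma Tm_int₁ (hb0 : 0 < b) (hb1 : b < 1) {g : ℝ → ℝ} (hg : memH10 g) :
    ∫ x in Ioo (0:ℝ) b, Tm b s g x = s * ∫ x in Ioo (0:ℝ) b, g x := by
  rw [setIntegral_congr_fun measurableSet_Ioo (fun x hx => Tm_on₁ hx)]
  rw [integral_add (intOn hg.1 (sub₁ hb1)) (integrable_const _), setIntegral_const, smul_eq_mul,
    measureReal_def, vol₁ hb0]
  field_simp
  ring

lemma Tm_int₂ (hb0 : 0 < b) (hb1 : b < 1) {g : ℝ → ℝ} (hg : memH10 g) :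
    ∫ x in Ioo b (1:ℝ), Tm b s g x = s * ∫ x in Ioo b (1:ℝ), g x := by
  rw [setIntegral_congr_fun measurableSet_Ioo (fun x hx => Tm_on₂ hx)]
  rw [integral_add ?ha ?hb, setIntegral_const, smul_eq_mul, measureReal_def, vol₂ hb1, integral_neg]
  case ha => exact (intOn hg.1 (sub₂ hb0)).neg
  case hb => exact integrable_const _
  have h1b : (1:ℝ) - b ≠ 0 := by linarith
  field_simp
  ring

lemma Tm_memℒp {g : ℝ → ℝ} (hg : memH10 g) :
    MemLp (Tm b s g) 2 (volume.restrict (Ioo (0:ℝ) 1)) := by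
  · have heq : Tm b s g = fun x =>
        (if x < b then (1:ℝ) else -1) * g x + (if x < b then (s - 1) * ((∫ t in Ioo (0:ℝ) b, g t) / b)
          else (s + 1) * ((∫ t in Ioo b (1:ℝ), g t) / (1 - b))) := by
      funext x; by_cases h : x < b <;> simp [Tm, h] <;> ring
    rw [heq]
    haveI := finsub (subset_refl (Ioo (0:ℝ) 1))
    refine MemLp.add ?_ ?_
    · refine memℒp_mul_bound (K := 1) (Measurable.ite (measurableSet_lt measurable_id
        measurable_const) measurable_const measurable_const) ?_ hg.1
      intro x; by_cases h : x < b <;> simp [h]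
    · set c₁ := (s - 1) * ((∫ t in Ioo (0:ℝ) b, g t) / b)
      set c₂ := (s + 1) * ((∫ t in Ioo b (1:ℝ), g t) / (1 - b))
      refine MemLp.of_le (memLp_const (max |c₁| |c₂|))
        ((Measurable.ite (measurableSet_lt measurable_id measurable_const) measurable_const
          measurable_const).aestronglyMeasurable) ?_
      filter_upwards with x
      simp only [Real.norm_eq_abs]
      rw [abs_of_nonneg (le_trans (abs_nonneg c₁) (le_max_left _ _))]
      by_cases h : x < b <;> simp [h, le_max_left, le_max_right]
lemma Tm_mem (hb0 : 0 < b) (hb1 : b < 1) {g : ℝ → ℝ} (hg : memH10 g) :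
    memH10 (Tm b s g) := by
  refine ⟨Tm_memℒp hg, ?_⟩
  have hT : IntegrableOn (Tm b s g) (Ioo (0:ℝ) 1) volume := intOn (Tm_memℒp hg) (subset_refl _)
  rw [split_int hb0 hb1 hT, Tm_int₁ hb0 hb1 hg, Tm_int₂ hb0 hb1 hg, ← mul_add,
    pq_zero hb0 hb1 hg, mul_zero]

end TPart

section TPart2
open MeasureTheory Set Real

variable {b s : ℝ}

lemma int_affine_sq {t : Set ℝ} (ht : t ⊆ Ioo (0:ℝ) 1) (hmt : MeasurableSet t)
    {g : ℝ → ℝ} (hg : MemLp g 2 (volume.restrict (Ioo (0:ℝ) 1))) (e c : ℝ) :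
    ∫ x in t, (e * g x + c)^2
      = e^2 * (∫ x in t, (g x)^2) + 2*e*c*(∫ x in t, g x) + (volume t).toReal * c^2 := by
  have i1 := intOn hg ht
  have i2 := intOnSq hg ht
  have key : ∀ x, (e*g x + c)^2 = e^2*(g x)^2 + (2*e*c)*g x + c^2 := fun x => by ring
  haveI := finsub ht
  simp_rw [key]
  rw [integral_add (by exact (i2.const_mul _).add (i1.const_mul _)) (by exact integrable_const _),
    integral_add (by exact i2.const_mul _) (by exact i1.const_mul _), integral_const_mul,
    integral_const_mul, setIntegral_const, smul_eq_mul, measureReal_def]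

lemma int_mul_affine {t : Set ℝ} (ht : t ⊆ Ioo (0:ℝ) 1) (hmt : MeasurableSet t)
    {g : ℝ → ℝ} (hg : MemLp g 2 (volume.restrict (Ioo (0:ℝ) 1))) (σ e c : ℝ) :
    ∫ x in t, σ * g x * (e * g x + c)
      = σ * e * (∫ x in t, (g x)^2) + σ * c * (∫ x in t, g x) := by
  have i1 := intOn hg ht
  have i2 := intOnSq hg ht
  have key : ∀ x, σ * g x * (e*g x + c) = (σ*e)*(g x)^2 + (σ*c)*g x := fun x => by ring
  simp_rw [key]
  rw [integral_add (by exact i2.const_mul _) (by exact i1.const_mul _), integral_const_mul,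
    integral_const_mul]

lemma Tm_invol (hb0 : 0 < b) (hb1 : b < 1) (hs : s = 1 ∨ s = -1) {g : ℝ → ℝ}
    (hg : memH10 g) : Tm b s (Tm b s g) = g := by
  have hs2 : s^2 = 1 := by rcases hs with rfl | rfl <;> norm_num
  have h1 : ∫ t in Ioo (0:ℝ) b, Tm b s g t = s * ∫ t in Ioo (0:ℝ) b, g t :=
    Tm_int₁ hb0 hb1 hg
  have h2 : ∫ t in Ioo b (1:ℝ), Tm b s g t = s * ∫ t in Ioo b (1:ℝ), g t :=
    Tm_int₂ hb0 hb1 hg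
  funext x
  have e : Tm b s (Tm b s g) x
      = if x < b then Tm b s g x + (s - 1) * ((∫ t in Ioo (0:ℝ) b, Tm b s g t) / b)
        else -Tm b s g x + (s + 1) * ((∫ t in Ioo b (1:ℝ), Tm b s g t) / (1 - b)) := rfl
  rw [e, h1, h2]
  by_cases h : x < b
  · rw [if_pos h]
    have e2 : Tm b s g x = g x + (s - 1) * ((∫ t in Ioo (0:ℝ) b, g t) / b) := by
      simp [Tm, h]
    rw [e2]
    linear_combination ((∫ t in Ioo (0:ℝ) b, g t) / b) * hs2
  · rw [if_neg h]
    have e2 : Tm b s g x = -g x + (s + 1) * ((∫ t in Ioo b (1:ℝ), g t) / (1 - b)) := by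
      simp [Tm, h]
    rw [e2]
    linear_combination ((∫ t in Ioo b (1:ℝ), g t) / (1 - b)) * hs2

lemma Tm_add (hb1 : b < 1) (hb0 : 0 < b) {g h : ℝ → ℝ} (hg : memH10 g) (hh : memH10 h) :
    Tm b s (g + h) = Tm b s g + Tm b s h := by
  have e1 : ∫ t in Ioo (0:ℝ) b, (g t + h t)
      = (∫ t in Ioo (0:ℝ) b, g t) + ∫ t in Ioo (0:ℝ) b, h t :=
    integral_add (intOn hg.1 (sub₁ hb1)) (intOn hh.1 (sub₁ hb1))
  have e2 : ∫ t in Ioo b (1:ℝ), (g t + h t)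
      = (∫ t in Ioo b (1:ℝ), g t) + ∫ t in Ioo b (1:ℝ), h t :=
    integral_add (intOn hg.1 (sub₂ hb0)) (intOn hh.1 (sub₂ hb0))
  funext x
  by_cases hx : x < b
  · simp only [Tm, Pi.add_apply, if_pos hx, e1, e2]; ring
  · simp only [Tm, Pi.add_apply, if_neg hx, e1, e2]; ring

lemma Tm_smul {g : ℝ → ℝ} (c : ℝ) : Tm b s (c • g) = c • Tm b s g := by
  have e1 : ∫ t in Ioo (0:ℝ) b, (c * g t) = c * ∫ t in Ioo (0:ℝ) b, g t :=
    integral_const_mul c g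
  have e2 : ∫ t in Ioo b (1:ℝ), (c * g t) = c * ∫ t in Ioo b (1:ℝ), g t :=
    integral_const_mul c g
  funext x
  by_cases hx : x < b
  · simp only [Tm, Pi.smul_apply, smul_eq_mul, if_pos hx, e1, e2]; ring
  · simp only [Tm, Pi.smul_apply, smul_eq_mul, if_neg hx, e1, e2]; ring

lemma Tm_nsq (hb0 : 0 < b) (hb1 : b < 1) (hs : s = 1 ∨ s = -1) {g : ℝ → ℝ}
    (hg : memH10 g) : nsq (Tm b s g) = nsq g := by
  have hs2 : s^2 = 1 := by rcases hs with rfl | rfl <;> norm_num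
  have hb : b ≠ 0 := hb0.ne'
  have h1b : (1:ℝ) - b ≠ 0 := by intro hc; exact absurd (by linarith : b = 1) hb1.ne
  rw [nsq, nsq, split_int hb0 hb1 (intOnSq (Tm_memℒp hg) (subset_refl _)),
    split_int hb0 hb1 (intOnSq hg.1 (subset_refl _))]
  have e1 : ∫ x in Ioo (0:ℝ) b, (Tm b s g x)^2
      = ∫ x in Ioo (0:ℝ) b, (1 * g x + (s - 1) * ((∫ t in Ioo (0:ℝ) b, g t) / b))^2 :=
    setIntegral_congr_fun measurableSet_Ioo (fun x hx => by rw [Tm_on₁ hx, one_mul])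
  have e2 : ∫ x in Ioo b (1:ℝ), (Tm b s g x)^2
      = ∫ x in Ioo b (1:ℝ), ((-1) * g x + (s + 1) * ((∫ t in Ioo b (1:ℝ), g t) / (1 - b)))^2 :=
    setIntegral_congr_fun measurableSet_Ioo (fun x hx => by rw [Tm_on₂ hx]; ring_nf)
  rw [e1, e2, int_affine_sq (sub₁ hb1) measurableSet_Ioo hg.1,
    int_affine_sq (sub₂ hb0) measurableSet_Ioo hg.1, Real.volume_Ioo, Real.volume_Ioo,
    ENNReal.toReal_ofReal (by linarith : (0:ℝ) ≤ b - 0),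
    ENNReal.toReal_ofReal (by linarith : (0:ℝ) ≤ 1 - b)]
  rcases hs with rfl | rfl <;> field_simp <;> ring

lemma Tm_aform {σ₁ σ₂ : ℝ} (hb0 : 0 < b) (hb1 : b < 1) {g : ℝ → ℝ} (hg : memH10 g) :
    aform b σ₁ σ₂ g (Tm b s g)
      = σ₁ * ((∫ x in Ioo (0:ℝ) b, (g x)^2)
          + (s - 1) * (∫ x in Ioo (0:ℝ) b, g x)^2 / b)
        + σ₂ * (-(∫ x in Ioo b (1:ℝ), (g x)^2)
          + (s + 1) * (∫ x in Ioo b (1:ℝ), g x)^2 / (1 - b)) := by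
  have e1 : ∫ x in Ioo (0:ℝ) b, σ₁ * g x * Tm b s g x
      = ∫ x in Ioo (0:ℝ) b, σ₁ * g x * (1 * g x + (s - 1) * ((∫ t in Ioo (0:ℝ) b, g t) / b)) :=
    setIntegral_congr_fun measurableSet_Ioo (fun x hx => by rw [Tm_on₁ hx, one_mul])
  have e2 : ∫ x in Ioo b (1:ℝ), σ₂ * g x * Tm b s g x
      = ∫ x in Ioo b (1:ℝ), σ₂ * g x * ((-1) * g x + (s + 1) * ((∫ t in Ioo b (1:ℝ), g t) / (1 - b))) :=
    setIntegral_congr_fun measurableSet_Ioo (fun x hx => by rw [Tm_on₂ hx]; ring_nf)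
  rw [aform, e1, e2, int_mul_affine (sub₁ hb1) measurableSet_Ioo hg.1,
    int_mul_affine (sub₂ hb0) measurableSet_Ioo hg.1]
  ring

lemma intOn3 {u v : ℝ → ℝ} {t : Set ℝ} (hu : MemLp u 2 (volume.restrict (Ioo (0:ℝ) 1)))
    (hv : MemLp v 2 (volume.restrict (Ioo (0:ℝ) 1))) (ht : t ⊆ Ioo (0:ℝ) 1) (σ : ℝ) :
    IntegrableOn (fun x => σ * u x * v x) t volume := by
  refine ((int_mul (memsub hu ht) (memsub hv ht)).const_mul σ).congr ?_
  filter_upwards with x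
  ring

end TPart2

section WPart
open MeasureTheory Set Real

-- ℓ depends only on a.e. class
lemma ell_congr {ℓ : (ℝ → ℝ) → ℝ}
    (hadd : ∀ g h : ℝ → ℝ, memH10 g → memH10 h → ℓ (g + h) = ℓ g + ℓ h)
    {M : ℝ} (hM : ∀ g, memH10 g → |ℓ g| ≤ M * Real.sqrt (nsq g))
    {p q : ℝ → ℝ} (hp : memH10 p) (hq : memH10 q)
    (hpq : p =ᵐ[volume.restrict (Ioo (0:ℝ) 1)] q) : ℓ p = ℓ q := by
  have hdmem : memH10 (p - q) := by
    refine ⟨hp.1.sub hq.1, ?_⟩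
    have : ∫ t in Ioo (0:ℝ) 1, (p - q) t = (∫ t in Ioo (0:ℝ) 1, p t) - ∫ t in Ioo (0:ℝ) 1, q t := by
      simp only [Pi.sub_apply]
      exact integral_sub (intOn hp.1 (subset_refl _)) (intOn hq.1 (subset_refl _))
    rw [this, hp.2, hq.2, sub_zero]
  have hsum : q + (p - q) = p := by funext x; simp
  have hz : ℓ (p - q) = 0 := by
    have hnsq : nsq (p - q) = 0 := by
      rw [nsq]
      have h0 : (fun t => ((p - q) t)^2) =ᵐ[volume.restrict (Ioo (0:ℝ) 1)] (fun _ => (0:ℝ)) := by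
        filter_upwards [hpq] with x hx
        simp [Pi.sub_apply, hx]
      rw [integral_congr_ae h0, integral_zero]
    have := hM _ hdmem
    rw [hnsq, Real.sqrt_zero, mul_zero] at this
    exact abs_eq_zero.mp (le_antisymm this (abs_nonneg _)) |>.symm ▸ rfl
  have := hadd q (p - q) hq hdmem
  rw [hsum] at this
  rw [this, hz, add_zero]

lemma norm_sq_eq {f : Lp ℝ 2 (volume.restrict (Ioo (0:ℝ) 1))} :
    ∫ a in Ioo (0:ℝ) 1, ((f : ℝ → ℝ) a)^2 = ‖f‖^2 := by
  have h1 : (inner ℝ f f : ℝ) = ∫ a in Ioo (0:ℝ) 1, (f : ℝ → ℝ) a * (f : ℝ → ℝ) a := by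
    rw [MeasureTheory.L2.inner_def]
    simp [RCLike.inner_apply]
    simp_rw [pow_two]
  rw [← real_inner_self_eq_norm_sq, h1]
  simp_rw [pow_two]

set_option maxHeartbeats 2000000 in
lemma wellposed (b σ₁ σ₂ : ℝ) (hb0 : 0 < b) (hb1 : b < 1) (h1 : 0 < σ₁) (h2 : σ₂ < 0)
    (hE : σ₁ * (1 - b) + σ₂ * b ≠ 0) (ℓ : (ℝ → ℝ) → ℝ)
    (hadd : ∀ g h : ℝ → ℝ, memH10 g → memH10 h → ℓ (g + h) = ℓ g + ℓ h)
    (hsmul : ∀ (c : ℝ) (g : ℝ → ℝ), memH10 g → ℓ (c • g) = c * ℓ g)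
    (hMex : ∃ M, ∀ g, memH10 g → |ℓ g| ≤ M * Real.sqrt (nsq g)) :
    ∃ u, memH10 u ∧ (∀ v, memH10 v → aform b σ₁ σ₂ u v = ℓ v) ∧
      ∀ u', memH10 u' → (∀ v, memH10 v → aform b σ₁ σ₂ u' v = ℓ v) →
        u' =ᵐ[volume.restrict (Ioo (0:ℝ) 1)] u := by
  obtain ⟨M₀, hM₀⟩ := hMex
  set M := max M₀ 0 with hMdef
  have hM : ∀ g, memH10 g → |ℓ g| ≤ M * Real.sqrt (nsq g) := by
    intro g hg
    exact (hM₀ g hg).trans (mul_le_mul_of_nonneg_right (le_max_left _ _) (Real.sqrt_nonneg _))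
  haveI : IsFiniteMeasure (volume.restrict (Ioo (0:ℝ) 1)) := finsub (subset_refl _)
  have hμ1 : (volume.restrict (Ioo (0:ℝ) 1)).real univ = 1 := by
    rw [measureReal_def, Measure.restrict_apply_univ, Real.volume_Ioo]
    norm_num
  -- the representative function of an Lp class, recentered to mean zero
  set rep : Lp ℝ 2 (volume.restrict (Ioo (0:ℝ) 1)) → (ℝ → ℝ) :=
    fun f => (fun x => (f : ℝ → ℝ) x - ∫ t in Ioo (0:ℝ) 1, (f : ℝ → ℝ) t) with hrep_def
  have hrep_mem : ∀ f, memH10 (rep f) := by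
    intro f
    constructor
    · exact (Lp.memLp f).sub (memLp_const _)
    · have hint : Integrable (f : ℝ → ℝ) (volume.restrict (Ioo (0:ℝ) 1)) :=
        (Lp.memLp f).integrable one_le_two
      rw [hrep_def]
      simp only
      rw [integral_sub hint (integrable_const _), integral_const, hμ1, smul_eq_mul, one_mul,
        sub_self]
  have hrep_ae : ∀ (f g : Lp ℝ 2 (volume.restrict (Ioo (0:ℝ) 1))), ((f : ℝ → ℝ))
      =ᵐ[volume.restrict (Ioo (0:ℝ) 1)] (g : ℝ → ℝ) → ℓ (rep f) = ℓ (rep g) := by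
    intro f g hfg
    have hmean : ∫ t in Ioo (0:ℝ) 1, (f : ℝ → ℝ) t = ∫ t in Ioo (0:ℝ) 1, (g : ℝ → ℝ) t :=
      integral_congr_ae hfg
    refine ell_congr hadd hM (hrep_mem f) (hrep_mem g) ?_
    filter_upwards [hfg] with x hx
    rw [hrep_def]
    simp only [hx, hmean]
  -- the continuous linear functional on L²
  set F₀ : Lp ℝ 2 (volume.restrict (Ioo (0:ℝ) 1)) →ₗ[ℝ] ℝ :=
    { toFun := fun f => ℓ (rep f)
      map_add' := by
        intro f g
        have h1 : ℓ (rep (f + g)) = ℓ (rep f + rep g) := by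
          have haa : ((f + g : Lp ℝ 2 (volume.restrict (Ioo (0:ℝ) 1))) : ℝ → ℝ)
              =ᵐ[volume.restrict (Ioo (0:ℝ) 1)] fun x => (f : ℝ → ℝ) x + (g : ℝ → ℝ) x :=
            Lp.coeFn_add f g
          have hmean : ∫ t in Ioo (0:ℝ) 1, ((f + g : Lp ℝ 2 (volume.restrict (Ioo (0:ℝ) 1))) : ℝ → ℝ) t
              = (∫ t in Ioo (0:ℝ) 1, (f : ℝ → ℝ) t) + ∫ t in Ioo (0:ℝ) 1, (g : ℝ → ℝ) t := by
            rw [integral_congr_ae haa]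
            exact integral_add ((Lp.memLp f).integrable one_le_two)
              ((Lp.memLp g).integrable one_le_two)
          refine ell_congr hadd hM (hrep_mem _) ⟨(hrep_mem f).1.add (hrep_mem g).1, ?_⟩ ?_
          · show (∫ t in Ioo (0:ℝ) 1, (rep f + rep g) t) = 0
            simp only [Pi.add_apply]
            rw [integral_add (intOn (hrep_mem f).1 (subset_refl _))
              (intOn (hrep_mem g).1 (subset_refl _)), (hrep_mem f).2, (hrep_mem g).2, add_zero]
          · filter_upwards [haa] with x hx
            rw [hrep_def]
            simp only [Pi.add_apply, hx, hmean]
            ring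
        show ℓ (rep (f + g)) = ℓ (rep f) + ℓ (rep g)
        rw [h1, hadd _ _ (hrep_mem f) (hrep_mem g)]
      map_smul' := by
        intro c f
        have h1 : ℓ (rep (c • f)) = ℓ (c • rep f) := by
          have haa : ((c • f : Lp ℝ 2 (volume.restrict (Ioo (0:ℝ) 1))) : ℝ → ℝ)
              =ᵐ[volume.restrict (Ioo (0:ℝ) 1)] fun x => c * (f : ℝ → ℝ) x :=
            Lp.coeFn_smul c f
          have hmean : ∫ t in Ioo (0:ℝ) 1, ((c • f : Lp ℝ 2 (volume.restrict (Ioo (0:ℝ) 1))) : ℝ → ℝ) t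
              = c * ∫ t in Ioo (0:ℝ) 1, (f : ℝ → ℝ) t := by
            rw [integral_congr_ae haa, integral_const_mul]
          refine ell_congr hadd hM (hrep_mem _) ⟨((hrep_mem f).1.const_smul c), ?_⟩ ?_
          · show (∫ t in Ioo (0:ℝ) 1, (c • rep f) t) = 0
            simp only [Pi.smul_apply, smul_eq_mul]
            rw [integral_const_mul, (hrep_mem f).2, mul_zero]
          · filter_upwards [haa] with x hx
            rw [hrep_def]
            simp only [Pi.smul_apply, smul_eq_mul, hx, hmean]
            ring
        show ℓ (rep (c • f)) = (RingHom.id ℝ) c • ℓ (rep f)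
        rw [h1, hsmul c _ (hrep_mem f)]
        simp } with hF₀def
  have hFbound : ∀ f, ‖F₀ f‖ ≤ M * ‖f‖ := by
    intro f
    have h1 : |ℓ (rep f)| ≤ M * Real.sqrt (nsq (rep f)) := hM _ (hrep_mem f)
    have h2 : nsq (rep f) ≤ ‖f‖^2 := by
      rw [nsq, ← norm_sq_eq (f := f)]
      set m := ∫ t in Ioo (0:ℝ) 1, (f : ℝ → ℝ) t with hm
      have he : ∫ t in Ioo (0:ℝ) 1, ((rep f) t)^2
          = ∫ t in Ioo (0:ℝ) 1, (((f : ℝ → ℝ) t)^2 - (2*m) * (f : ℝ → ℝ) t + m^2) := by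
        refine integral_congr_ae (Filter.Eventually.of_forall fun x => ?_)
        rw [hrep_def]
        simp only [← hm]
        ring
      have isq : Integrable (fun t => ((f : ℝ → ℝ) t)^2) (volume.restrict (Ioo (0:ℝ) 1)) :=
        (Lp.memLp f).integrable_sq
      have ilin : Integrable (fun t => (2*m) * (f : ℝ → ℝ) t) (volume.restrict (Ioo (0:ℝ) 1)) :=
        ((Lp.memLp f).integrable one_le_two).const_mul (2*m)
      rw [he, integral_add (by exact isq.sub ilin) (by exact integrable_const _),
        integral_sub (by exact isq) (by exact ilin),
        integral_const_mul, integral_const, hμ1, smul_eq_mul, one_mul, ← hm]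
      nlinarith [sq_nonneg m]
    have h3 : Real.sqrt (nsq (rep f)) ≤ ‖f‖ := by
      calc Real.sqrt (nsq (rep f)) ≤ Real.sqrt (‖f‖^2) := Real.sqrt_le_sqrt h2
      _ = ‖f‖ := Real.sqrt_sq (norm_nonneg f)
    calc ‖F₀ f‖ = |ℓ (rep f)| := rfl
    _ ≤ M * Real.sqrt (nsq (rep f)) := h1
    _ ≤ M * ‖f‖ := mul_le_mul_of_nonneg_left h3 (le_max_right M₀ 0)
  set F : Lp ℝ 2 (volume.restrict (Ioo (0:ℝ) 1)) →L[ℝ] ℝ := F₀.mkContinuous M hFbound with hFdef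
  set r₀ : Lp ℝ 2 (volume.restrict (Ioo (0:ℝ) 1)) :=
    (InnerProductSpace.toDual ℝ (Lp ℝ 2 (volume.restrict (Ioo (0:ℝ) 1)))).symm F with hr₀def
  set r : ℝ → ℝ := (r₀ : ℝ → ℝ) with hrdef
  have hrmem : MemLp r 2 (volume.restrict (Ioo (0:ℝ) 1)) := Lp.memLp r₀
  -- representation of ℓ
  have hrep_ℓ : ∀ h, memH10 h → ℓ h = ∫ x in Ioo (0:ℝ) 1, r x * h x := by
    intro h hh
    set H : Lp ℝ 2 (volume.restrict (Ioo (0:ℝ) 1)) := hh.1.toLp h with hHdef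
    have hH : (H : ℝ → ℝ) =ᵐ[volume.restrict (Ioo (0:ℝ) 1)] h := MemLp.coeFn_toLp _
    have hinner : (inner ℝ r₀ H : ℝ) = F H := InnerProductSpace.toDual_symm_apply
    have hFH : F H = ℓ (rep H) := rfl
    have hℓ : ℓ (rep H) = ℓ h := by
      have hmean : ∫ t in Ioo (0:ℝ) 1, (H : ℝ → ℝ) t = 0 := by
        rw [integral_congr_ae hH]; exact hh.2
      refine ell_congr hadd hM (hrep_mem H) hh ?_
      filter_upwards [hH] with x hx
      rw [hrep_def]
      simp only [hmean, hx, sub_zero]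
    have hIP : (inner ℝ r₀ H : ℝ) = ∫ x in Ioo (0:ℝ) 1, r x * h x := by
      rw [MeasureTheory.L2.inner_def]
      simp only [RCLike.inner_apply, starRingEnd_apply, star_trivial]
      refine integral_congr_ae ?_
      filter_upwards [hH] with x hx
      rw [hx]
      exact mul_comm _ _
    rw [← hIP, hinner, hFH, hℓ]
  -- construct the solution
  have hσ1 : σ₁ ≠ 0 := h1.ne'
  have hσ2 : σ₂ ≠ 0 := h2.ne
  have h1b : (1:ℝ) - b ≠ 0 := by linarith
  have hσmeas : Measurable (fun x : ℝ => if x < b then σ₁ else σ₂) :=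
    Measurable.ite (measurableSet_lt measurable_id measurable_const) measurable_const
      measurable_const
  have hσbd : ∀ x, |(fun x : ℝ => if x < b then σ₁ else σ₂) x| ≤ max |σ₁| |σ₂| := by
    intro x; by_cases h : x < b <;> simp [h, le_max_left, le_max_right]
  set invσ : ℝ → ℝ := fun x => (if x < b then σ₁ else σ₂)⁻¹ with hinvσdef
  have hinvσ_meas : Measurable invσ := hσmeas.inv
  have hinvσ_bd : ∀ x, |invσ x| ≤ max |σ₁⁻¹| |σ₂⁻¹| := by
    intro x; rw [hinvσdef]; by_cases h : x < b <;> simp [h, le_max_left, le_max_right]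
  have hinvσ2 : MemLp invσ 2 (volume.restrict (Ioo (0:ℝ) 1)) := by
    refine MemLp.of_le (memLp_const (max |σ₁⁻¹| |σ₂⁻¹|)) hinvσ_meas.aestronglyMeasurable ?_
    filter_upwards with x
    rw [Real.norm_eq_abs, Real.norm_eq_abs,
      abs_of_nonneg (le_trans (abs_nonneg _) (le_max_left |σ₁⁻¹| _))]
    exact hinvσ_bd x
  have hinvσ_int : Integrable invσ (volume.restrict (Ioo (0:ℝ) 1)) :=
    hinvσ2.integrable one_le_two
  set D : ℝ := ∫ x in Ioo (0:ℝ) 1, invσ x with hDdef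
  have hDval : D = b * σ₁⁻¹ + (1-b) * σ₂⁻¹ := by
    rw [hDdef, split_int hb0 hb1 hinvσ_int]
    have e1 : ∫ x in Ioo (0:ℝ) b, invσ x = ∫ x in Ioo (0:ℝ) b, (σ₁⁻¹ : ℝ) :=
      setIntegral_congr_fun measurableSet_Ioo (fun x hx => by
        rw [hinvσdef]; simp [hx.2])
    have e2 : ∫ x in Ioo b (1:ℝ), invσ x = ∫ x in Ioo b (1:ℝ), (σ₂⁻¹ : ℝ) :=
      setIntegral_congr_fun measurableSet_Ioo (fun x hx => by
        rw [hinvσdef]; simp [not_lt.mpr hx.1.le])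
    rw [e1, e2, setIntegral_const, setIntegral_const, smul_eq_mul, smul_eq_mul, measureReal_def, measureReal_def, vol₁ hb0,
      vol₂ hb1]
  have hD : D ≠ 0 := by
    rw [hDval]
    intro hc
    apply hE
    field_simp at hc
    nlinarith [hc]
  set c₀ : ℝ := -(∫ x in Ioo (0:ℝ) 1, r x * invσ x) / D with hc₀def
  set u : ℝ → ℝ := fun x => invσ x * (r x + c₀) with hudef
  have hrc : MemLp (fun x => r x + c₀) 2 (volume.restrict (Ioo (0:ℝ) 1)) := by
    exact hrmem.add (memLp_const c₀)
  have humem2 : MemLp u 2 (volume.restrict (Ioo (0:ℝ) 1)) :=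
    memℒp_mul_bound hinvσ_meas hinvσ_bd hrc
  have hu_int0 : (∫ t in Ioo (0:ℝ) 1, u t) = 0 := by
    have key : ∀ x, u x = r x * invσ x + c₀ * invσ x := fun x => by
      simp only [hudef, hinvσdef]; ring
    simp_rw [key]
    rw [integral_add (by exact int_mul hrmem hinvσ2) (by exact hinvσ_int.const_mul c₀),
      integral_const_mul, ← hDdef, hc₀def]
    field_simp
    ring
  have humem : memH10 u := ⟨humem2, hu_int0⟩
  have hsol : ∀ v, memH10 v → aform b σ₁ σ₂ u v = ℓ v := by
    intro v hv
    have e1 : ∫ x in Ioo (0:ℝ) b, σ₁ * u x * v x = ∫ x in Ioo (0:ℝ) b, (r x + c₀) * v x := by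
      refine setIntegral_congr_fun measurableSet_Ioo (fun x hx => ?_)
      simp only [hudef, hinvσdef]
      rw [if_pos hx.2]
      field_simp
    have e2 : ∫ x in Ioo b (1:ℝ), σ₂ * u x * v x = ∫ x in Ioo b (1:ℝ), (r x + c₀) * v x := by
      refine setIntegral_congr_fun measurableSet_Ioo (fun x hx => ?_)
      simp only [hudef, hinvσdef]
      rw [if_neg (not_lt.mpr hx.1.le)]
      field_simp
    have hint : IntegrableOn (fun x => (r x + c₀) * v x) (Ioo (0:ℝ) 1) volume :=
      int_mul hrc hv.1
    rw [aform, e1, e2, ← split_int hb0 hb1 hint]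
    have key : ∀ x, (r x + c₀) * v x = r x * v x + c₀ * v x := fun x => by ring
    simp_rw [key]
    rw [integral_add (by exact int_mul hrmem hv.1)
      (by exact (intOn hv.1 (subset_refl _)).const_mul c₀),
      integral_const_mul, hv.2, mul_zero, add_zero, ← hrep_ℓ v hv]
  refine ⟨u, humem, hsol, ?_⟩
  -- uniqueness
  intro u' hu' hsol'
  set d : ℝ → ℝ := u' - u with hddef
  have hd2 : MemLp d 2 (volume.restrict (Ioo (0:ℝ) 1)) := hu'.1.sub humem2
  have hd0 : (∫ t in Ioo (0:ℝ) 1, d t) = 0 := by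
    have : ∀ t, d t = u' t - u t := fun t => rfl
    simp_rw [this]
    rw [integral_sub (intOn hu'.1 (subset_refl _)) (intOn humem2 (subset_refl _)), hu'.2,
      hu_int0, sub_zero]
  set f : ℝ → ℝ := fun x => (if x < b then σ₁ else σ₂) * d x with hfdef
  have hf2 : MemLp f 2 (volume.restrict (Ioo (0:ℝ) 1)) := memℒp_mul_bound hσmeas hσbd hd2
  have hfint : Integrable f (volume.restrict (Ioo (0:ℝ) 1)) := hf2.integrable one_le_two
  have hzero : ∀ v, memH10 v → (∫ x in Ioo (0:ℝ) 1, f x * v x) = 0 := by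
    intro v hv
    have hintf : IntegrableOn (fun x => f x * v x) (Ioo (0:ℝ) 1) volume := int_mul hf2 hv.1
    have eA : ∫ x in Ioo (0:ℝ) b, f x * v x
        = (∫ x in Ioo (0:ℝ) b, σ₁ * u' x * v x) - ∫ x in Ioo (0:ℝ) b, σ₁ * u x * v x := by
      rw [← integral_sub (by exact intOn3 hu'.1 hv.1 (sub₁ hb1) σ₁)
        (by exact intOn3 humem2 hv.1 (sub₁ hb1) σ₁)]
      refine setIntegral_congr_fun measurableSet_Ioo (fun x hx => ?_)
      simp only [hfdef, hddef, Pi.sub_apply]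
      rw [if_pos hx.2]
      ring
    have eB : ∫ x in Ioo b (1:ℝ), f x * v x
        = (∫ x in Ioo b (1:ℝ), σ₂ * u' x * v x) - ∫ x in Ioo b (1:ℝ), σ₂ * u x * v x := by
      rw [← integral_sub (by exact intOn3 hu'.1 hv.1 (sub₂ hb0) σ₂)
        (by exact intOn3 humem2 hv.1 (sub₂ hb0) σ₂)]
      refine setIntegral_congr_fun measurableSet_Ioo (fun x hx => ?_)
      simp only [hfdef, hddef, Pi.sub_apply]
      rw [if_neg (not_lt.mpr hx.1.le)]
      ring
    have := hsol' v hv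
    have h2' := hsol v hv
    rw [aform] at this h2'
    rw [split_int hb0 hb1 hintf, eA, eB]
    linarith
  set m : ℝ := ∫ x in Ioo (0:ℝ) 1, f x with hmdef
  have hfm2 : MemLp (fun x => f x - m) 2 (volume.restrict (Ioo (0:ℝ) 1)) := by
    exact hf2.sub (memLp_const m)
  have hv₀mem : memH10 (fun x => f x - m) := by
    refine ⟨hfm2, ?_⟩
    rw [integral_sub hfint (integrable_const _), integral_const, hμ1, smul_eq_mul, one_mul,
      ← hmdef, sub_self]
  have h00 := hzero _ hv₀mem
  have hInt2 : (∫ x in Ioo (0:ℝ) 1, (f x)^2) = m * m := by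
    have key : ∀ x, f x * (f x - m) = (f x)^2 - m * f x := fun x => by ring
    simp_rw [key] at h00
    rw [integral_sub (by exact hf2.integrable_sq) (by exact hfint.const_mul m),
      integral_const_mul, ← hmdef, sub_eq_zero] at h00
    exact h00
  have hvar : (∫ x in Ioo (0:ℝ) 1, (f x - m)^2) = 0 := by
    have key : ∀ x, (f x - m)^2 = (f x)^2 - (2*m) * f x + m^2 := fun x => by ring
    simp_rw [key]
    rw [integral_add (by exact hf2.integrable_sq.sub (hfint.const_mul (2*m)))
      (by exact integrable_const _),
      integral_sub (by exact hf2.integrable_sq) (by exact hfint.const_mul (2*m)),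
      integral_const_mul, integral_const, hμ1, smul_eq_mul, one_mul, ← hmdef, hInt2]
    ring
  have hae : (fun x => (f x - m)^2) =ᵐ[volume.restrict (Ioo (0:ℝ) 1)] 0 := by
    refine (integral_eq_zero_iff_of_nonneg (fun x => sq_nonneg _) ?_).mp hvar
    exact hfm2.integrable_sq
  have hfm : f =ᵐ[volume.restrict (Ioo (0:ℝ) 1)] (fun _ => m) := by
    filter_upwards [hae] with x hx
    have : (f x - m)^2 = 0 := hx
    have := pow_eq_zero_iff (n := 2) (by norm_num) |>.mp this
    linarith [this]
  have hdm : d =ᵐ[volume.restrict (Ioo (0:ℝ) 1)] (fun x => m * invσ x) := by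
    filter_upwards [hfm] with x hx
    have hσx : (if x < b then σ₁ else σ₂) ≠ 0 := by
      by_cases h : x < b <;> simp [h, hσ1, hσ2]
    have : d x = (if x < b then σ₁ else σ₂)⁻¹ * ((if x < b then σ₁ else σ₂) * d x) :=
      (inv_mul_cancel_left₀ hσx (d x)).symm
    rw [this]
    have hx' : (if x < b then σ₁ else σ₂) * d x = m := hx
    rw [hx', hinvσdef]
    ring
  have hm0 : m = 0 := by
    have : (∫ t in Ioo (0:ℝ) 1, d t) = m * D := by
      rw [integral_congr_ae hdm, integral_const_mul, ← hDdef]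
    rw [hd0] at this
    rcases mul_eq_zero.mp this.symm with h | h
    · exact h
    · exact absurd h hD
  filter_upwards [hdm] with x hx
  have : d x = 0 := by rw [hx, hm0, zero_mul]
  have hdx : u' x - u x = 0 := this
  linarith [hdx]


end WPart


set_option maxHeartbeats 1000000 in
/-- T-coercivity of the local sign-changing transmission problem away from
the critical contrast, and the resulting Hadamard well-posedness. -/
theorem stmt0 (b σ₁ σ₂ : ℝ) (hb : b ∈ Ioo (0:ℝ) 1) (h1 : 0 < σ₁) (h2 : σ₂ < 0)
    (hcontrast : |σ₂| / σ₁ ≠ (1 - b) / b) :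
    ∃ T : (ℝ → ℝ) → (ℝ → ℝ),
      Set.BijOn T {g | memH10 g} {g | memH10 g} ∧
      (∀ g h : ℝ → ℝ, memH10 g → memH10 h → ∀ c : ℝ,
        T (g + h) = T g + T h ∧ T (c • g) = c • T g) ∧
      (∃ C > 0, ∀ g, memH10 g → nsq (T g) ≤ C * nsq g) ∧
      (∃ α > 0, ∀ g, memH10 g → α * nsq g ≤ |aform b σ₁ σ₂ g (T g)|) ∧
      -- in particular, A : H¹₀ → H⁻¹ is an isomorphism: for every bounded linear
      -- functional ℓ there is a unique (up to a.e. equality of derivatives) solution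
      (∀ ℓ : (ℝ → ℝ) → ℝ,
        (∀ g h : ℝ → ℝ, memH10 g → memH10 h → ℓ (g + h) = ℓ g + ℓ h) →
        (∀ (c : ℝ) (g : ℝ → ℝ), memH10 g → ℓ (c • g) = c * ℓ g) →
        (∃ M, ∀ g, memH10 g → |ℓ g| ≤ M * Real.sqrt (nsq g)) →
        ∃ u, memH10 u ∧ (∀ v, memH10 v → aform b σ₁ σ₂ u v = ℓ v) ∧
          ∀ u', memH10 u' → (∀ v, memH10 v → aform b σ₁ σ₂ u' v = ℓ v) →
            u' =ᵐ[volume.restrict (Ioo (0:ℝ) 1)] u) := by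
  obtain ⟨hb0, hb1⟩ := hb
  have h1b : (0:ℝ) < 1 - b := by linarith
  have hE : σ₁ * (1 - b) + σ₂ * b ≠ 0 := by
    intro h
    apply hcontrast
    rw [abs_of_neg h2]
    field_simp
    linarith
  set E : ℝ := σ₁ * (1 - b) + σ₂ * b with hEdef
  set s : ℝ := if 0 < E then 1 else -1 with hsdef
  have hs : s = 1 ∨ s = -1 := by
    rw [hsdef]; by_cases h : 0 < E <;> simp [h]
  set α : ℝ := min (min σ₁ (-σ₂)) |E| with hαdef
  have hα0 : 0 < α := lt_min (lt_min h1 (neg_pos.mpr h2)) (abs_pos.mpr hE)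
  have hαsE : α ≤ s * E := by
    have h1' : α ≤ |E| := min_le_right _ _
    rcases lt_or_ge 0 E with h | h
    · rw [hsdef, if_pos h, one_mul]
      rwa [abs_of_pos h] at h1'
    · have hlt : E < 0 := lt_of_le_of_ne h hE
      rw [hsdef, if_neg (not_lt.mpr h), neg_one_mul]
      rwa [abs_of_neg hlt] at h1'
  refine ⟨Tm b s, ?_, ?_, ?_, ?_, ?_⟩
  · -- bijective
    refine Set.InvOn.bijOn ⟨fun g hg => Tm_invol hb0 hb1 hs hg, fun g hg => Tm_invol hb0 hb1 hs hg⟩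
      (fun g hg => Tm_mem hb0 hb1 hg) (fun g hg => Tm_mem hb0 hb1 hg)
  · -- linear
    intro g h hg hh c
    exact ⟨Tm_add hb1 hb0 hg hh, Tm_smul c⟩
  · -- bounded
    exact ⟨1, one_pos, fun g hg => le_of_eq (by rw [Tm_nsq hb0 hb1 hs hg, one_mul])⟩
  · -- coercive
    refine ⟨α, hα0, fun g hg => ?_⟩
    set p : ℝ := ∫ x in Ioo (0:ℝ) b, g x with hp
    set q : ℝ := ∫ x in Ioo b (1:ℝ), g x with hq
    set A₁ : ℝ := ∫ x in Ioo (0:ℝ) b, (g x)^2 with hA₁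
    set A₂ : ℝ := ∫ x in Ioo b (1:ℝ), (g x)^2 with hA₂
    have hpq : p + q = 0 := pq_zero hb0 hb1 hg
    haveI i1 : IsFiniteMeasure (volume.restrict (Ioo (0:ℝ) b)) := finIoo 0 b
    haveI i2 : IsFiniteMeasure (volume.restrict (Ioo b (1:ℝ))) := finIoo b 1
    have hp2 : p^2 ≤ b * A₁ := by
      have := cs_sq (memsub hg.1 (sub₁ hb1))
      rwa [Measure.restrict_apply_univ, vol₁' hb0] at this
    have hq2 : q^2 ≤ (1-b) * A₂ := by
      have := cs_sq (memsub hg.1 (sub₂ hb0))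
      rwa [Measure.restrict_apply_univ, vol₂' hb1] at this
    have hnsq : nsq g = A₁ + A₂ := by
      rw [nsq, split_int hb0 hb1 (intOnSq hg.1 (subset_refl _))]
    have hval : aform b σ₁ σ₂ g (Tm b s g)
        = σ₁ * (A₁ + (s - 1) * p^2 / b) + σ₂ * (-A₂ + (s + 1) * q^2 / (1 - b)) :=
      Tm_aform hb0 hb1 hg
    have hqp : q = -p := by linarith
    have hineq : α * nsq g ≤ aform b σ₁ σ₂ g (Tm b s g) := by
      rw [hval, hnsq, ← sub_nonneg, hqp]
      have key : σ₁ * (A₁ + (s - 1) * p^2 / b) + σ₂ * (-A₂ + (s + 1) * (-p)^2 / (1 - b))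
          - α * (A₁ + A₂)
          = ((σ₁ - α) * (b * A₁ - p^2) * (1 - b) + (-σ₂ - α) * ((1-b) * A₂ - p^2) * b
            + (s * E - α) * p^2) / (b * (1 - b)) := by
        rw [hEdef]
        field_simp
        ring
      rw [key]
      have hα1 : 0 ≤ σ₁ - α := by
        have : α ≤ σ₁ := le_trans (min_le_left _ _) (min_le_left _ _)
        linarith
      have hα2 : 0 ≤ -σ₂ - α := by
        have : α ≤ -σ₂ := le_trans (min_le_left _ _) (min_le_right _ _)
        linarith
      have hq2' : p^2 ≤ (1-b) * A₂ := by
        have hsq : q^2 = p^2 := by rw [hqp]; ring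
        linarith [hq2, hsq.symm.le, hsq.le]
      refine div_nonneg ?_ (by positivity)
      have t1 : 0 ≤ (σ₁ - α) * (b * A₁ - p^2) * (1 - b) := by
        apply mul_nonneg (mul_nonneg hα1 (by linarith)) h1b.le
      have t2 : 0 ≤ (-σ₂ - α) * ((1-b) * A₂ - p^2) * b := by
        apply mul_nonneg (mul_nonneg hα2 (by linarith)) hb0.le
      have t3 : 0 ≤ (s * E - α) * p^2 := mul_nonneg (by linarith) (sq_nonneg p)
      linarith
    calc α * nsq g ≤ aform b σ₁ σ₂ g (Tm b s g) := hineq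
    _ ≤ |aform b σ₁ σ₂ g (Tm b s g)| := le_abs_self _
  · -- well-posedness
    intro ℓ hadd hsmul hMex
    exact wellposed b σ₁ σ₂ hb0 hb1 h1 h2 hE ℓ hadd hsmul hMex


end
end

section
/- Let 0<b<1 and for s∈(1/2,1) define φ^s(x)=(x/b)^s on (0,b) and ((1-x)/(1-b))^s on (b,1), and φ(x)=x/b on (0,b), (1-x)/(1-b) on (b,1). Then there is C>0 such that for 1-s sufficiently small, ‖φ^s - φ‖_{H¹(0,1)} ≤ C(1-s). -/
open MeasureTheory Set Real

noncomputable section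

/-- The fractional interface lifting `φ^s`. -/
def phis (s b : ℝ) (x : ℝ) : ℝ :=
  if x ∈ Ioo (0:ℝ) b then (x / b) ^ s
  else if x ∈ Ioo b 1 then ((1 - x) / (1 - b)) ^ s
  else 0

/-- The local interface profile `φ`. -/
def phi (b : ℝ) (x : ℝ) : ℝ :=
  if x ∈ Ioo (0:ℝ) b then x / b
  else if x ∈ Ioo b 1 then (1 - x) / (1 - b)
  else 0

/-- Derivative of `φ^s - φ` (piecewise, away from the interface `b`). -/
def dDiff (s b : ℝ) (x : ℝ) : ℝ :=
  if x < b then s * (x / b) ^ (s - 1) / b - 1 / b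
  else -(s * ((1 - x) / (1 - b)) ^ (s - 1)) / (1 - b) + 1 / (1 - b)

lemma ae_ne_vol (b : ℝ) : ∀ᵐ x : ℝ, x ≠ b := by
  rw [MeasureTheory.ae_iff]
  simpa using measure_singleton b

lemma lemA {s : ℝ} (hs : s ∈ Ioo (1/2 : ℝ) 1) :
    ∫ z in (0:ℝ)..1, (z ^ s - z)^2 = 2*(1-s)^2/(3*(2*s+1)*(s+2)) := by
  obtain ⟨hs2, hs1⟩ := hs
  have hs0 : 0 < s := by linarith
  have h1 : IntervalIntegrable (fun z : ℝ => z ^ (2*s)) volume 0 1 :=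
    intervalIntegral.intervalIntegrable_rpow' (by linarith)
  have h2 : IntervalIntegrable (fun z : ℝ => z ^ (s+1)) volume 0 1 :=
    intervalIntegral.intervalIntegrable_rpow' (by linarith)
  have h3 : IntervalIntegrable (fun z : ℝ => z ^ (2:ℕ)) volume 0 1 :=
    ((continuous_pow 2).intervalIntegrable 0 1)
  have heq : EqOn (fun z : ℝ => (z ^ s - z)^2)
      (fun z : ℝ => z^(2*s) - 2*z^(s+1) + z^(2:ℕ)) (uIcc (0:ℝ) 1) := by
    intro z hz
    rw [uIcc_of_le zero_le_one] at hz
    rcases eq_or_lt_of_le hz.1 with h0 | h0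
    · simp [← h0, Real.zero_rpow hs0.ne', Real.zero_rpow (show 2*s ≠ 0 by linarith),
        Real.zero_rpow (show s+1 ≠ 0 by linarith)]
    · have e1 : z^(2*s) = z^s * z^s := by
        rw [show 2*s = s + s by ring, Real.rpow_add h0]
      have e2 : z^(s+1) = z^s * z := by rw [Real.rpow_add h0, Real.rpow_one]
      simp only [e1, e2]
      ring
  rw [intervalIntegral.integral_congr heq,
    intervalIntegral.integral_add ((h1.sub (h2.const_mul 2))) h3,
    intervalIntegral.integral_sub h1 (h2.const_mul 2),
    intervalIntegral.integral_const_mul,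
    integral_rpow (Or.inl (by linarith : (-1:ℝ) < 2*s)),
    integral_rpow (Or.inl (by linarith : (-1:ℝ) < s+1)),
    integral_pow]
  rw [Real.one_rpow, Real.one_rpow, Real.zero_rpow (show 2*s+1 ≠ 0 by linarith),
    Real.zero_rpow (show s+1+1 ≠ 0 by linarith)]
  norm_num
  have d1 : 2*s+1 ≠ 0 := by linarith
  have d2 : s+2 ≠ 0 := by linarith
  field_simp
  ring

lemma lemB {s : ℝ} (hs : s ∈ Ioo (1/2 : ℝ) 1) :
    ∫ z in (0:ℝ)..1, (s * z ^ (s-1) - 1)^2 = (1-s)^2/(2*s-1) := by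
  obtain ⟨hs2, hs1⟩ := hs
  have hs0 : 0 < s := by linarith
  have h1 : IntervalIntegrable (fun z : ℝ => z ^ ((s-1)*2)) volume 0 1 :=
    intervalIntegral.intervalIntegrable_rpow' (by linarith)
  have h2 : IntervalIntegrable (fun z : ℝ => z ^ (s-1)) volume 0 1 :=
    intervalIntegral.intervalIntegrable_rpow' (by linarith)
  have heq : EqOn (fun z : ℝ => (s * z ^ (s-1) - 1)^2)
      (fun z : ℝ => s^2 * z^((s-1)*2) - 2*s*z^(s-1) + 1) (uIcc (0:ℝ) 1) := by
    intro z hz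
    rw [uIcc_of_le zero_le_one] at hz
    rcases eq_or_lt_of_le hz.1 with h0 | h0
    · simp [← h0, Real.zero_rpow (show s-1 ≠ 0 by linarith),
        Real.zero_rpow (show (s-1)*2 ≠ 0 by nlinarith)]
    · have e1 : z^((s-1)*2) = z^(s-1) * z^(s-1) := by
        rw [show (s-1)*2 = (s-1) + (s-1) by ring, Real.rpow_add h0]
      simp only [e1]
      ring
  rw [intervalIntegral.integral_congr heq,
    intervalIntegral.integral_add (((h1.const_mul _)).sub (h2.const_mul _))
      intervalIntegrable_const,
    intervalIntegral.integral_sub (h1.const_mul _) (h2.const_mul _),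
    intervalIntegral.integral_const_mul, intervalIntegral.integral_const_mul,
    integral_rpow (Or.inl (by linarith : (-1:ℝ) < (s-1)*2)),
    integral_rpow (Or.inl (by linarith : (-1:ℝ) < s-1)),
    intervalIntegral.integral_const]
  rw [Real.one_rpow, Real.one_rpow, Real.zero_rpow (show (s-1)*2+1 ≠ 0 by nlinarith),
    Real.zero_rpow (show s-1+1 ≠ 0 by linarith)]
  have d1 : 2*s-1 ≠ 0 := by linarith
  have d2 : s ≠ 0 := hs0.ne'
  have d3 : -1 + s*2 ≠ 0 := by linarith
  have d4 : (s-1)*2+1 ≠ 0 := by linarith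
  have d5 : s-1+1 ≠ 0 := by linarith
  have d6 : s*2-1 ≠ 0 := by linarith
  norm_num
  field_simp
  ring

lemma coreA {s : ℝ} (hs : s ∈ Ioo (1/2 : ℝ) 1) {c : ℝ} (hc : 0 < c) :
    ∫ x in (0:ℝ)..c, ((x/c) ^ s - x/c)^2 = c * (2*(1-s)^2/(3*(2*s+1)*(s+2))) := by
  have h := intervalIntegral.integral_comp_div (a := 0) (b := c)
    (fun z : ℝ => (z ^ s - z)^2) hc.ne'
  simp only [zero_div, div_self hc.ne'] at h
  rw [h, lemA hs, smul_eq_mul]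

lemma coreB {s : ℝ} (hs : s ∈ Ioo (1/2 : ℝ) 1) {c : ℝ} (hc : 0 < c) :
    ∫ x in (0:ℝ)..c, (s * (x/c) ^ (s-1) / c - 1/c)^2 = (1-s)^2/((2*s-1)*c) := by
  have key : ∀ z : ℝ, (s * z ^ (s-1) / c - 1/c)^2 = (1/c^2) * (s * z ^ (s-1) - 1)^2 := by
    intro z
    field_simp
  have h := intervalIntegral.integral_comp_div (a := 0) (b := c)
    (fun z : ℝ => (s * z ^ (s-1) / c - 1/c)^2) hc.ne'
  simp only [zero_div, div_self hc.ne'] at h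
  rw [h]
  simp only [key]
  rw [intervalIntegral.integral_const_mul, lemB hs, smul_eq_mul]
  have d1 : 2*s-1 ≠ 0 := by obtain ⟨h2, _⟩ := hs; linarith
  field_simp

lemma contQ {s : ℝ} (hs0 : 0 ≤ s) (c : ℝ) :
    Continuous (fun u : ℝ => ((u/c) ^ s - u/c)^2) := by
  have h : Continuous fun u : ℝ => (u/c) ^ s :=
    (Real.continuous_rpow_const hs0).comp (continuous_id.div_const c)
  exact (h.sub (continuous_id.div_const c)).pow 2

lemma intB {s : ℝ} (hs : s ∈ Ioo (1/2 : ℝ) 1) {c : ℝ} (hc : 0 < c) :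
    IntervalIntegrable (fun x : ℝ => (s * (x/c) ^ (s-1) / c - 1/c)^2) volume 0 c := by
  obtain ⟨hs2, hs1⟩ := hs
  have base : IntervalIntegrable (fun z : ℝ => (s * z ^ (s-1) - 1)^2) volume 0 1 := by
    have h1 : IntervalIntegrable
        (fun z : ℝ => s^2 * z^((s-1)*2) - 2*s*z^(s-1) + 1) volume 0 1 :=
      (((intervalIntegral.intervalIntegrable_rpow' (by linarith)).const_mul _).sub
        ((intervalIntegral.intervalIntegrable_rpow' (by linarith)).const_mul _)).add
        intervalIntegrable_const
    apply h1.congr_ae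
    filter_upwards [ae_restrict_mem measurableSet_uIoc] with z hz
    rw [uIoc_of_le zero_le_one] at hz
    have e1 : z^((s-1)*2) = z^(s-1) * z^(s-1) := by
      rw [show (s-1)*2 = (s-1) + (s-1) by ring, Real.rpow_add hz.1]
    simp only [e1]
    ring
  have key : (fun z : ℝ => (s * z ^ (s-1) / c - 1/c)^2)
      = fun z : ℝ => (1/c^2) * (s * z ^ (s-1) - 1)^2 := by
    funext z
    field_simp
  have base2 : IntervalIntegrable (fun z : ℝ => (s * z ^ (s-1) / c - 1/c)^2) volume 0 1 := by
    rw [key]; exact base.const_mul _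
  have h3 := base2.comp_mul_right (c := c⁻¹)
  have e0 : (0:ℝ)/c⁻¹ = 0 := zero_div _
  have e1 : (1:ℝ)/c⁻¹ = c := by field_simp
  rw [e0, e1] at h3
  simpa only [← div_eq_mul_inv] using h3

/-- `‖φ^s - φ‖_{H¹(0,1)} ≤ C (1-s)` for `1-s` sufficiently small, stated
through the squared `H¹` norm. -/
theorem stmt7 (b : ℝ) (hb : b ∈ Ioo (0:ℝ) 1) :
    ∃ C > 0, ∃ s₀ ∈ Ioo (1/2 : ℝ) 1, ∀ s ∈ Ioo s₀ 1,
      (∫ x in Ioo (0:ℝ) 1, (phis s b x - phi b x)^2) +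
        (∫ x in Ioo (0:ℝ) 1, (dDiff s b x)^2) ≤ (C * (1 - s))^2 := by
  obtain ⟨hb0, hb1⟩ := hb
  have hcb : 0 < 1 - b := by linarith
  refine ⟨1 + 2/b + 2/(1-b), by positivity, 3/4, by norm_num, ?_⟩
  intro s hsi
  obtain ⟨hs34, hs1⟩ := hsi
  have hs : s ∈ Ioo (1/2 : ℝ) 1 := ⟨by linarith, hs1⟩
  have hs0 : 0 < s := by linarith
  -- EqOn identities for the zeroth-order term
  have eq1 : EqOn (fun x : ℝ => (phis s b x - phi b x)^2)
      (fun x : ℝ => ((x/b) ^ s - x/b)^2) (uIcc 0 b) := by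
    rw [uIcc_of_le hb0.le]
    intro x hx
    by_cases h : x ∈ Ioo (0:ℝ) b
    · simp only [phis, phi, if_pos h]
    · have hx' : x = 0 ∨ x = b := by
        rcases eq_or_lt_of_le hx.1 with h0 | h0
        · exact Or.inl h0.symm
        rcases eq_or_lt_of_le hx.2 with hb' | hb'
        · exact Or.inr hb'
        · exact absurd ⟨h0, hb'⟩ h
      rcases hx' with rfl | hxb
      · have h2 : (0:ℝ) ∉ Ioo b 1 := by simp [not_lt.mpr hb0.le, Set.mem_Ioo]
        simp [phis, phi, h, h2, Real.zero_rpow hs0.ne']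
      · subst hxb
        have h2 : x ∉ Ioo x 1 := by simp [Set.mem_Ioo]
        simp [phis, phi, h, h2, div_self hb0.ne', Real.one_rpow]
  have eq2 : EqOn (fun x : ℝ => (phis s b x - phi b x)^2)
      (fun x : ℝ => (((1-x)/(1-b)) ^ s - (1-x)/(1-b))^2) (uIcc b 1) := by
    rw [uIcc_of_le hb1.le]
    intro x hx
    by_cases h : x ∈ Ioo b 1
    · have h1 : x ∉ Ioo (0:ℝ) b := fun hh => absurd hh.2 (not_lt.mpr h.1.le)
      simp only [phis, phi, if_neg h1, if_pos h]
    · have hx' : x = b ∨ x = 1 := by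
        rcases eq_or_lt_of_le hx.1 with h0 | h0
        · exact Or.inl h0.symm
        rcases eq_or_lt_of_le hx.2 with hb' | hb'
        · exact Or.inr hb'
        · exact absurd ⟨h0, hb'⟩ h
      rcases hx' with hxb | rfl
      · subst hxb
        have h1 : x ∉ Ioo (0:ℝ) x := by simp [Set.mem_Ioo]
        simp [phis, phi, h, h1, div_self hcb.ne', Real.one_rpow]
      · have h1 : (1:ℝ) ∉ Ioo (0:ℝ) b := by simp [Set.mem_Ioo, not_lt.mpr hb1.le]
        simp [phis, phi, h, h1, Real.zero_rpow hs0.ne']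
  -- integrability of the zeroth-order term
  have hI1 : IntervalIntegrable (fun x : ℝ => (phis s b x - phi b x)^2) volume 0 b := by
    apply ((contQ hs0.le b).intervalIntegrable 0 b).congr_ae
    filter_upwards [ae_restrict_mem measurableSet_uIoc] with x hx
    exact (eq1 (uIoc_subset_uIcc hx)).symm
  have hI2 : IntervalIntegrable (fun x : ℝ => (phis s b x - phi b x)^2) volume b 1 := by
    have hc : Continuous (fun x : ℝ => (((1-x)/(1-b)) ^ s - (1-x)/(1-b))^2) :=
      (contQ hs0.le (1-b)).comp (continuous_const.sub continuous_id)
    apply (hc.intervalIntegrable b 1).congr_ae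
    filter_upwards [ae_restrict_mem measurableSet_uIoc] with x hx
    exact (eq2 (uIoc_subset_uIcc hx)).symm
  have E1 : (∫ x in Ioo (0:ℝ) 1, (phis s b x - phi b x)^2)
      = (∫ x in (0:ℝ)..b, ((x/b) ^ s - x/b)^2)
        + ∫ x in b..1, (((1-x)/(1-b)) ^ s - (1-x)/(1-b))^2 := by
    rw [← integral_Ioc_eq_integral_Ioo, ← intervalIntegral.integral_of_le zero_le_one,
      ← intervalIntegral.integral_add_adjacent_intervals hI1 hI2,
      intervalIntegral.integral_congr eq1, intervalIntegral.integral_congr eq2]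
  have V1 : (∫ x in (0:ℝ)..b, ((x/b) ^ s - x/b)^2)
      = b * (2*(1-s)^2/(3*(2*s+1)*(s+2))) := coreA hs hb0
  have V2 : (∫ x in b..1, (((1-x)/(1-b)) ^ s - (1-x)/(1-b))^2)
      = (1-b) * (2*(1-s)^2/(3*(2*s+1)*(s+2))) := by
    have h := intervalIntegral.integral_comp_sub_left (a := b) (b := 1)
      (fun u : ℝ => ((u/(1-b)) ^ s - u/(1-b))^2) 1
    rw [show (1:ℝ)-1 = 0 from by norm_num] at h
    rw [h, coreA hs hcb]
  -- derivative term
  have hane : ∀ᵐ x : ℝ, x ≠ b := ae_ne_vol b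
  have hd1 : IntervalIntegrable (fun x : ℝ => (dDiff s b x)^2) volume 0 b := by
    apply (intB hs hb0).congr_ae
    filter_upwards [ae_restrict_mem measurableSet_uIoc, ae_restrict_of_ae hane] with x hx hxb
    rw [uIoc_of_le hb0.le] at hx
    have hlt : x < b := lt_of_le_of_ne hx.2 hxb
    simp only [dDiff, if_pos hlt]
  have hd2 : IntervalIntegrable (fun x : ℝ => (dDiff s b x)^2) volume b 1 := by
    have base := intB hs hcb
    have h3 := base.comp_sub_left 1
    norm_num at h3
    apply h3.symm.congr_ae
    filter_upwards [ae_restrict_mem measurableSet_uIoc] with x hx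
    rw [uIoc_of_le hb1.le] at hx
    have hlt : ¬ x < b := not_lt.mpr hx.1.le
    simp only [dDiff, if_neg hlt]
    ring
  have E2 : (∫ x in Ioo (0:ℝ) 1, (dDiff s b x)^2)
      = (∫ x in (0:ℝ)..b, (s * (x/b) ^ (s-1) / b - 1/b)^2)
        + ∫ x in b..1, (s * ((1-x)/(1-b)) ^ (s-1) / (1-b) - 1/(1-b))^2 := by
    rw [← integral_Ioc_eq_integral_Ioo, ← intervalIntegral.integral_of_le zero_le_one,
      ← intervalIntegral.integral_add_adjacent_intervals hd1 hd2]
    congr 1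
    · apply intervalIntegral.integral_congr_ae
      filter_upwards [hane] with x hxb hx
      rw [uIoc_of_le hb0.le] at hx
      have hlt : x < b := lt_of_le_of_ne hx.2 hxb
      simp only [dDiff, if_pos hlt]
    · apply intervalIntegral.integral_congr_ae
      filter_upwards with x hx
      rw [uIoc_of_le hb1.le] at hx
      have hlt : ¬ x < b := not_lt.mpr hx.1.le
      simp only [dDiff, if_neg hlt]
      ring
  have V3 : (∫ x in (0:ℝ)..b, (s * (x/b) ^ (s-1) / b - 1/b)^2)
      = (1-s)^2/((2*s-1)*b) := coreB hs hb0
  have V4 : (∫ x in b..1, (s * ((1-x)/(1-b)) ^ (s-1) / (1-b) - 1/(1-b))^2)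
      = (1-s)^2/((2*s-1)*(1-b)) := by
    have h := intervalIntegral.integral_comp_sub_left (a := b) (b := 1)
      (fun u : ℝ => (s * (u/(1-b)) ^ (s-1) / (1-b) - 1/(1-b))^2) 1
    rw [show (1:ℝ)-1 = 0 from by norm_num] at h
    rw [h, coreB hs hcb]
  rw [E1, E2, V1, V2, V3, V4]
  -- numeric estimates
  have hA : (2*(1-s)^2/(3*(2*s+1)*(s+2))) ≤ (1-s)^2 := by
    rw [div_le_iff₀ (by nlinarith : (0:ℝ) < 3*(2*s+1)*(s+2))]
    nlinarith [mul_nonneg (sq_nonneg (1-s)) (show (0:ℝ) ≤ 3*(2*s+1)*(s+2) - 2 by nlinarith)]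
  have hB : (1-s)^2/(2*s-1) ≤ 2*(1-s)^2 := by
    rw [div_le_iff₀ (by linarith : (0:ℝ) < 2*s-1)]
    nlinarith [sq_nonneg (1-s)]
  have e3 : (1-s)^2/((2*s-1)*b) = (1/b) * ((1-s)^2/(2*s-1)) := by
    rw [← div_div, div_eq_inv_mul, one_div]
  have e4 : (1-s)^2/((2*s-1)*(1-b)) = (1/(1-b)) * ((1-s)^2/(2*s-1)) := by
    rw [← div_div, div_eq_inv_mul, one_div]
  rw [e3, e4]
  have step1 : b * (2*(1-s)^2/(3*(2*s+1)*(s+2))) + (1-b) * (2*(1-s)^2/(3*(2*s+1)*(s+2)))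
      + ((1/b) * ((1-s)^2/(2*s-1)) + (1/(1-b)) * ((1-s)^2/(2*s-1)))
      ≤ (1-s)^2 + ((1/b) * (2*(1-s)^2) + (1/(1-b)) * (2*(1-s)^2)) := by
    have hb' : b * (2*(1-s)^2/(3*(2*s+1)*(s+2))) + (1-b) * (2*(1-s)^2/(3*(2*s+1)*(s+2)))
        = 2*(1-s)^2/(3*(2*s+1)*(s+2)) := by ring
    rw [hb']
    have t1 : (1/b) * ((1-s)^2/(2*s-1)) ≤ (1/b) * (2*(1-s)^2) :=
      mul_le_mul_of_nonneg_left hB (by positivity)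
    have t2 : (1/(1-b)) * ((1-s)^2/(2*s-1)) ≤ (1/(1-b)) * (2*(1-s)^2) :=
      mul_le_mul_of_nonneg_left hB (by positivity)
    exact add_le_add hA (add_le_add t1 t2)
  refine le_trans step1 ?_
  have hC1 : (1:ℝ) ≤ 1 + 2/b + 2/(1-b) := by
    have p1 : (0:ℝ) ≤ 2/b := by positivity
    have p2 : (0:ℝ) ≤ 2/(1-b) := by positivity
    linarith
  have heq : (1-s)^2 + ((1/b) * (2*(1-s)^2) + (1/(1-b)) * (2*(1-s)^2))
      = (1 + 2/b + 2/(1-b)) * (1-s)^2 := by ring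
  rw [heq, mul_pow]
  have hKK : (1 + 2/b + 2/(1-b)) ≤ (1 + 2/b + 2/(1-b))^2 := by nlinarith [hC1]
  exact mul_le_mul_of_nonneg_right hKK (sq_nonneg (1-s))

end
end

section
/- Let 0<b<1, σ₁>0, σ₂<0 with σ₁(1-b)+σ₂b ≠ 0, let f ∈ L²(0,1), and let u be the weak solution of -(σ(x)u')' = f on (0,1) with u(0)=u(1)=0, where σ=σ₁ on (0,b) and σ=σ₂ on (b,1). Then (σ₁/b + σ₂/(1-b)) · u(b) = ∫₀¹ f(x)φ(x) dx, where φ(x)=x/b on (0,b) and (1-x)/(1-b) on (b,1). -/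
open MeasureTheory Set Real

noncomputable section

lemma intconst (a c k : ℝ) (h : a ≤ c) : (∫ _ in Ioo a c, k) = k * (c - a) := by
  rw [setIntegral_const, measureReal_def, Real.volume_Ioo, ENNReal.toReal_ofReal (by linarith)]
  rw [smul_eq_mul, mul_comm]

/-- Interface value formula for the local transmission problem: if `u` (with
weak derivative `g`) is the weak solution of `-(σ u')' = f`, `u(0)=u(1)=0`,
then `(σ₁/b + σ₂/(1-b)) u(b) = ∫₀¹ f φ`. Here `u(x) = ∫₀ˣ g`. -/
theorem stmt12 (b σ₁ σ₂ : ℝ) (hb : b ∈ Ioo (0:ℝ) 1)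
    (h1 : 0 < σ₁) (h2 : σ₂ < 0) (hnd : σ₁ * (1 - b) + σ₂ * b ≠ 0)
    (f : ℝ → ℝ) (hf : MemLp f 2 (volume.restrict (Ioo (0:ℝ) 1)))
    (g : ℝ → ℝ) (hg : memH10 g)
    (hweak : ∀ v, memH10 v →
      ((∫ x in Ioo (0:ℝ) b, σ₁ * g x * v x) + ∫ x in Ioo b 1, σ₂ * g x * v x) =
        ∫ x in Ioo (0:ℝ) 1, f x * (∫ t in Ioo (0:ℝ) x, v t)) :
    (σ₁ / b + σ₂ / (1 - b)) * (∫ t in Ioo (0:ℝ) b, g t) =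
      ∫ x in Ioo (0:ℝ) 1, f x * phi b x := by
  obtain ⟨hb0, hb1⟩ := hb
  have hbne : b ≠ 0 := ne_of_gt hb0
  have h1b : (0:ℝ) < 1 - b := by linarith
  have h1bne : (1:ℝ) - b ≠ 0 := ne_of_gt h1b
  set v : ℝ → ℝ := (Ioo (0:ℝ) b).indicator (fun _ => 1/b)
      + (Ioo b 1).indicator (fun _ => -(1/(1-b))) with hv
  -- v values
  have hv1 : ∀ x ∈ Ioo (0:ℝ) b, v x = 1/b := by
    intro x hx
    have hx2 : x ∉ Ioo b 1 := fun h => absurd hx.2 (not_lt.2 h.1.le)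
    simp [hv, indicator_of_mem hx, indicator_of_notMem hx2]
  have hv2 : ∀ x ∈ Ioo b 1, v x = -(1/(1-b)) := by
    intro x hx
    have hx2 : x ∉ Ioo (0:ℝ) b := fun h => absurd h.2 (not_lt.2 hx.1.le)
    simp [hv, indicator_of_mem hx, indicator_of_notMem hx2]
  -- computation of the primitive of v
  have hprim : ∀ x ∈ Ioo (0:ℝ) 1, x ≠ b → (∫ t in Ioo (0:ℝ) x, v t) = phi b x := by
    intro x hx hxb
    have hadd : (∫ t in Ioo (0:ℝ) x, v t)
        = (∫ t in Ioo (0:ℝ) x, (Ioo (0:ℝ) b).indicator (fun _ => 1/b) t)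
          + ∫ t in Ioo (0:ℝ) x, (Ioo b 1).indicator (fun _ => -(1/(1-b))) t := by
      rw [hv]
      exact integral_add ((integrable_const _).indicator measurableSet_Ioo)
        ((integrable_const _).indicator measurableSet_Ioo)
    rw [hadd, setIntegral_indicator measurableSet_Ioo,
      setIntegral_indicator measurableSet_Ioo, Ioo_inter_Ioo, Ioo_inter_Ioo]
    rcases lt_or_gt_of_ne hxb with hlt | hgt
    · have e1 : max (0:ℝ) 0 = 0 := by simp
      have e2 : min x b = x := min_eq_left hlt.le
      have e3 : max (0:ℝ) b = b := max_eq_right hb0.le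
      have e4 : min x 1 = x := min_eq_left hx.2.le
      rw [e1, e2, e3, e4, Ioo_eq_empty (not_lt.2 hlt.le)]
      simp only [Measure.restrict_empty, integral_zero_measure, add_zero]
      rw [intconst _ _ _ hx.1.le, phi, if_pos ⟨hx.1, hlt⟩]
      field_simp
      ring
    · have e1 : max (0:ℝ) 0 = 0 := by simp
      have e2 : min x b = b := min_eq_right hgt.le
      have e3 : max (0:ℝ) b = b := max_eq_right hb0.le
      have e4 : min x 1 = x := min_eq_left hx.2.le
      rw [e1, e2, e3, e4, intconst _ _ _ hb0.le, intconst _ _ _ hgt.le]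
      have hnp : x ∉ Ioo (0:ℝ) b := fun h => absurd h.2 (not_lt.2 hgt.le)
      rw [phi, if_neg hnp, if_pos ⟨hgt, hx.2⟩]
      field_simp
      ring
  -- v ∈ H¹₀
  have hvH : memH10 v := by
    constructor
    · have hA : MemLp ((Ioo (0:ℝ) b).indicator (fun _ => 1/b)) 2
          (volume.restrict (Ioo (0:ℝ) 1)) :=
        memLp_indicator_const 2 measurableSet_Ioo _ (Or.inr (measure_ne_top _ _))
      have hB : MemLp ((Ioo b 1).indicator (fun _ => -(1/(1-b)))) 2
          (volume.restrict (Ioo (0:ℝ) 1)) :=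
        memLp_indicator_const 2 measurableSet_Ioo _ (Or.inr (measure_ne_top _ _))
      exact hA.add hB
    · have hadd : (∫ t in Ioo (0:ℝ) 1, v t)
          = (∫ t in Ioo (0:ℝ) 1, (Ioo (0:ℝ) b).indicator (fun _ => 1/b) t)
            + ∫ t in Ioo (0:ℝ) 1, (Ioo b 1).indicator (fun _ => -(1/(1-b))) t := by
        rw [hv]
        exact integral_add ((integrable_const _).indicator measurableSet_Ioo)
          ((integrable_const _).indicator measurableSet_Ioo)
      rw [hadd, setIntegral_indicator measurableSet_Ioo,
        setIntegral_indicator measurableSet_Ioo, Ioo_inter_Ioo, Ioo_inter_Ioo]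
      have e1 : max (0:ℝ) 0 = 0 := by simp
      have e2 : min (1:ℝ) b = b := min_eq_right hb1.le
      have e3 : max (0:ℝ) b = b := max_eq_right hb0.le
      have e4 : min (1:ℝ) 1 = 1 := min_self 1
      rw [e1, e2, e3, e4, intconst _ _ _ hb0.le, intconst _ _ _ hb1.le]
      field_simp
      ring
  -- the weak formulation applied to v
  have hw := hweak v hvH
  -- LHS of hw
  have hL1 : (∫ x in Ioo (0:ℝ) b, σ₁ * g x * v x)
      = (σ₁/b) * ∫ x in Ioo (0:ℝ) b, g x := by
    rw [← integral_const_mul]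
    refine setIntegral_congr_fun measurableSet_Ioo fun x hx => ?_
    rw [hv1 x hx]; field_simp
  have hL2 : (∫ x in Ioo b 1, σ₂ * g x * v x)
      = -(σ₂/(1-b)) * ∫ x in Ioo b 1, g x := by
    rw [← integral_const_mul]
    refine setIntegral_congr_fun measurableSet_Ioo fun x hx => ?_
    rw [hv2 x hx]; field_simp
  -- splitting the zero-mean condition
  have hgint : IntegrableOn g (Ioo (0:ℝ) 1) := hg.1.integrable (by norm_num)
  have hsplit : (∫ t in Ioo b 1, g t) = -∫ t in Ioo (0:ℝ) b, g t := by
    have hu : Ioo (0:ℝ) b ∪ Ico b 1 = Ioo (0:ℝ) 1 := Ioo_union_Ico_eq_Ioo hb0 hb1.le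
    have hd : Disjoint (Ioo (0:ℝ) b) (Ico b 1) := by
      refine Set.disjoint_left.2 fun x hx hx' => absurd hx.2 (not_lt.2 hx'.1)
    have := hg.2
    rw [← hu, setIntegral_union hd measurableSet_Ico
      (hgint.mono_set (by rw [← hu]; exact subset_union_left))
      (hgint.mono_set (by rw [← hu]; exact subset_union_right)),
      integral_Ico_eq_integral_Ioo] at this
    linarith
  -- RHS of hw
  have hbnull : (volume : Measure ℝ) {b} = 0 := measure_singleton b
  have hR : (∫ x in Ioo (0:ℝ) 1, f x * (∫ t in Ioo (0:ℝ) x, v t))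
      = ∫ x in Ioo (0:ℝ) 1, f x * phi b x := by
    refine setIntegral_congr_ae measurableSet_Ioo ?_
    have hne : ∀ᵐ x : ℝ, x ≠ b := by
      rw [ae_iff]; simpa using hbnull
    filter_upwards [hne] with x hxb hx
    rw [hprim x hx hxb]
  rw [hL1, hL2, hsplit, hR] at hw
  rw [← hw]; ring

end
end
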